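/- Let M be a real m×n matrix satisfying the RIP of order 2k with constant δ ∈ (0,1). Let x̃ ∈ ℝⁿ be a vector with support L̃, let T ⊆ {1,…,n} be a set of indices disjoint from L̃ with |T| + |L̃| ≤ 2k and T nonempty, and let ỹ = M x̃. Then M_TᵀM_T is invertible, ‖P_T ỹ‖² ≤ δ² ‖ỹ‖², and ‖R_T ỹ‖² ≥ (1 − δ²) ‖ỹ‖². -/

import Mathlib

open Matrix

noncomputable section

/-- `M` satisfies the RIP of order `s` with constant `δ` if
`(1−δ)‖v‖² ≤ ‖Mv‖² ≤ (1+δ)‖v‖²` for every `v` with at most `s` nonzero entries. -/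
def RIP {m n : ℕ} (M : Matrix (Fin m) (Fin n) ℝ) (s : ℕ) (δ : ℝ) : Prop :=
  ∀ v : Fin n → ℝ, (∃ S : Finset (Fin n), S.card ≤ s ∧ ∀ i ∉ S, v i = 0) →
    (1 - δ) * (v ⬝ᵥ v) ≤ (M *ᵥ v) ⬝ᵥ (M *ᵥ v) ∧
      (M *ᵥ v) ⬝ᵥ (M *ᵥ v) ≤ (1 + δ) * (v ⬝ᵥ v)

/-- `M_T`: the submatrix of `M` of the columns indexed by `T`. -/
def colsOf {m n : ℕ} (M : Matrix (Fin m) (Fin n) ℝ) (T : Finset (Fin n)) :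
    Matrix (Fin m) {i // i ∈ T} ℝ :=
  M.submatrix id fun j => (j : Fin n)

/-- `P_T = M_T (M_TᵀM_T)⁻¹ M_Tᵀ`. -/
def projT {m n : ℕ} (M : Matrix (Fin m) (Fin n) ℝ) (T : Finset (Fin n)) :
    Matrix (Fin m) (Fin m) ℝ :=
  colsOf M T * ((colsOf M T)ᵀ * colsOf M T)⁻¹ * (colsOf M T)ᵀ

/-- `R_T = I − P_T`. -/
def residT {m n : ℕ} (M : Matrix (Fin m) (Fin n) ℝ) (T : Finset (Fin n)) :
    Matrix (Fin m) (Fin m) ℝ :=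
  1 - projT M T

/- ### auxiliary -/

def extT {n : ℕ} (T : Finset (Fin n)) (w : {i // i ∈ T} → ℝ) : Fin n → ℝ :=
  fun i => if h : i ∈ T then w ⟨i, h⟩ else 0

lemma extT_not_mem {n : ℕ} (T : Finset (Fin n)) (w : {i // i ∈ T} → ℝ) {i : Fin n}
    (h : i ∉ T) : extT T w i = 0 := dif_neg h

lemma dot_extT {n : ℕ} (T : Finset (Fin n)) (w : {i // i ∈ T} → ℝ) (g : Fin n → ℝ) :
    g ⬝ᵥ extT T w = ∑ j : {i // i ∈ T}, g j * w j := by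
  rw [dotProduct]
  rw [← Finset.sum_subset (Finset.subset_univ T)
    (by intro j _ hj; rw [extT_not_mem T w hj, mul_zero])]
  rw [← Finset.sum_attach T (fun j => g j * extT T w j)]
  rw [Finset.univ_eq_attach]
  refine Finset.sum_congr rfl fun j _ => ?_
  rw [extT, dif_pos j.2]

lemma mulVec_extT {m n : ℕ} (M : Matrix (Fin m) (Fin n) ℝ) (T : Finset (Fin n))
    (w : {i // i ∈ T} → ℝ) : M *ᵥ extT T w = colsOf M T *ᵥ w := by
  funext i
  rw [mulVec, dot_extT T w (fun j => M i j)]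
  rfl

lemma extT_dot_self {n : ℕ} (T : Finset (Fin n)) (w : {i // i ∈ T} → ℝ) :
    extT T w ⬝ᵥ extT T w = w ⬝ᵥ w := by
  rw [dot_extT]
  refine Finset.sum_congr rfl fun j _ => ?_
  rw [extT, dif_pos j.2]

lemma dot_transpose_mulVec {m : ℕ} {ι : Type*} [Fintype ι]
    (B : Matrix (Fin m) ι ℝ) (x : ι → ℝ) (y : Fin m → ℝ) :
    x ⬝ᵥ (Bᵀ *ᵥ y) = (B *ᵥ x) ⬝ᵥ y := by
  rw [mulVec_transpose, dotProduct_comm, ← dotProduct_mulVec, dotProduct_comm]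

lemma projT_transpose {m n : ℕ} (M : Matrix (Fin m) (Fin n) ℝ) (T : Finset (Fin n)) :
    (projT M T)ᵀ = projT M T := by
  set B := colsOf M T with hB
  have hAT : (Bᵀ * B)ᵀ = Bᵀ * B := by rw [transpose_mul, transpose_transpose]
  show (B * (Bᵀ * B)⁻¹ * Bᵀ)ᵀ = B * (Bᵀ * B)⁻¹ * Bᵀ
  rw [transpose_mul, transpose_mul, transpose_transpose, transpose_nonsing_inv, hAT,
    Matrix.mul_assoc]

lemma projT_idem {m n : ℕ} (M : Matrix (Fin m) (Fin n) ℝ) (T : Finset (Fin n))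
    (hA : IsUnit ((colsOf M T)ᵀ * colsOf M T)) :
    projT M T * projT M T = projT M T := by
  set B := colsOf M T with hB
  have h2 : (Bᵀ * B) * (Bᵀ * B)⁻¹ = 1 :=
    mul_nonsing_inv _ ((isUnit_iff_isUnit_det _).1 hA)
  show (B * (Bᵀ * B)⁻¹ * Bᵀ) * (B * (Bᵀ * B)⁻¹ * Bᵀ) = B * (Bᵀ * B)⁻¹ * Bᵀ
  calc (B * (Bᵀ * B)⁻¹ * Bᵀ) * (B * (Bᵀ * B)⁻¹ * Bᵀ)
      = B * (Bᵀ * B)⁻¹ * (((Bᵀ * B) * (Bᵀ * B)⁻¹) * Bᵀ) := by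
        simp only [Matrix.mul_assoc]
    _ = B * (Bᵀ * B)⁻¹ * Bᵀ := by rw [h2, Matrix.one_mul]

theorem stmt5 {m n k : ℕ} (M : Matrix (Fin m) (Fin n) ℝ) (δ : ℝ)
    (hδ0 : 0 < δ) (hδ1 : δ < 1) (hRIP : RIP M (2 * k) δ)
    (xt : Fin n → ℝ) (Lt : Finset (Fin n)) (hsupp : ∀ i, xt i ≠ 0 ↔ i ∈ Lt)
    (T : Finset (Fin n)) (hdisj : Disjoint T Lt)
    (hcard : T.card + Lt.card ≤ 2 * k) (hTne : T.Nonempty)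
    (yt : Fin m → ℝ) (hyt : yt = M *ᵥ xt) :
    IsUnit ((colsOf M T)ᵀ * colsOf M T) ∧
      (projT M T *ᵥ yt) ⬝ᵥ (projT M T *ᵥ yt) ≤ δ ^ 2 * (yt ⬝ᵥ yt) ∧
      (residT M T *ᵥ yt) ⬝ᵥ (residT M T *ᵥ yt) ≥ (1 - δ ^ 2) * (yt ⬝ᵥ yt) := by
  classical
  set B := colsOf M T with hB
  -- positive definiteness of the Gram matrix
  have hApd : (Bᵀ * B).PosDef := by
    refine posDef_iff_dotProduct_mulVec.mpr ⟨?_, fun x hx => ?_⟩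
    · rw [IsHermitian, conjTranspose_eq_transpose_of_trivial, transpose_mul,
        transpose_transpose]
    · have hx2 : (0:ℝ) < x ⬝ᵥ x :=
        lt_of_le_of_ne (Finset.sum_nonneg fun i _ => mul_self_nonneg (x i))
          (fun h => hx (dotProduct_self_eq_zero.mp h.symm))
      have hrip := (hRIP (extT T x)
        ⟨T, le_trans (Nat.le_add_right _ _) hcard, fun i h => extT_not_mem T x h⟩).1
      rw [extT_dot_self, mulVec_extT] at hrip
      have key : x ⬝ᵥ ((Bᵀ * B) *ᵥ x) = (B *ᵥ x) ⬝ᵥ (B *ᵥ x) := by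
        rw [← mulVec_mulVec, dot_transpose_mulVec]
      simp only [star_trivial]
      rw [key]
      calc (0:ℝ) < (1 - δ) * (x ⬝ᵥ x) := mul_pos (by linarith) hx2
        _ ≤ _ := hrip
  have hAunit : IsUnit (Bᵀ * B) := hApd.isUnit
  -- projection facts
  have hPdef : projT M T = B * (Bᵀ * B)⁻¹ * Bᵀ := rfl
  have hPt := projT_transpose M T
  have hPP := projT_idem M T (by rw [← hB]; exact hAunit)
  have hself : ∀ u v : Fin m → ℝ,
      (projT M T *ᵥ u) ⬝ᵥ v = u ⬝ᵥ (projT M T *ᵥ v) := by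
    intro u v
    have h := dot_transpose_mulVec (projT M T) u v
    rw [hPt] at h
    exact h.symm
  set p := projT M T *ᵥ yt with hp
  have hppy : p ⬝ᵥ p = yt ⬝ᵥ p := by
    have h1 : (projT M T *ᵥ yt) ⬝ᵥ p = yt ⬝ᵥ (projT M T *ᵥ p) := hself yt p
    have h2 : projT M T *ᵥ p = p := by
      rw [hp, mulVec_mulVec, hPP]
    rw [hp, h1, h2]
  set w : {i // i ∈ T} → ℝ := (Bᵀ * B)⁻¹ *ᵥ (Bᵀ *ᵥ yt) with hw
  set we : Fin n → ℝ := extT T w with hwe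
  have hpwe : M *ᵥ we = p := by
    rw [hwe, mulVec_extT, ← hB, hw, mulVec_mulVec, mulVec_mulVec, hp, hPdef]
  have hcross : xt ⬝ᵥ we = 0 := by
    apply Finset.sum_eq_zero
    intro i _
    by_cases hi : i ∈ T
    · have hiL : i ∉ Lt := Finset.disjoint_left.mp hdisj hi
      have hxi : xt i = 0 := by
        by_contra h; exact hiL ((hsupp i).1 h)
      rw [hxi, zero_mul]
    · rw [hwe, extT_not_mem T w hi, mul_zero]
  have hrip2 : ∀ s : ℝ,
      (1 - δ) * ((δ • xt + s • we) ⬝ᵥ (δ • xt + s • we)) ≤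
          (M *ᵥ (δ • xt + s • we)) ⬝ᵥ (M *ᵥ (δ • xt + s • we)) ∧
        (M *ᵥ (δ • xt + s • we)) ⬝ᵥ (M *ᵥ (δ • xt + s • we)) ≤
          (1 + δ) * ((δ • xt + s • we) ⬝ᵥ (δ • xt + s • we)) := by
    intro s
    refine hRIP _ ⟨Lt ∪ T, ?_, ?_⟩
    · calc (Lt ∪ T).card ≤ Lt.card + T.card := Finset.card_union_le _ _
        _ ≤ 2 * k := by omega
    · intro i hi
      rw [Finset.mem_union, not_or] at hi
      have hxi : xt i = 0 := by
        by_contra h; exact hi.1 ((hsupp i).1 h)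
      have hwei : we i = 0 := extT_not_mem T w hi.2
      simp [hxi, hwei]
  have hMv : ∀ s : ℝ, M *ᵥ (δ • xt + s • we) = δ • yt + s • p := by
    intro s
    rw [mulVec_add, mulVec_smul, mulVec_smul, hpwe, hyt]
  have hyp : yt ⬝ᵥ p = p ⬝ᵥ p := hppy.symm
  have hnum : ∀ s : ℝ, (δ • yt + s • p) ⬝ᵥ (δ • yt + s • p) =
      δ * δ * (yt ⬝ᵥ yt) + 2 * δ * s * (p ⬝ᵥ p) + s * s * (p ⬝ᵥ p) := by
    intro s
    simp only [dotProduct_add, add_dotProduct, dotProduct_smul, smul_dotProduct,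
      smul_eq_mul]
    rw [hyp, dotProduct_comm p yt, hyp]
    ring
  have hden : ∀ s : ℝ, (δ • xt + s • we) ⬝ᵥ (δ • xt + s • we) =
      δ * δ * (xt ⬝ᵥ xt) + s * s * (we ⬝ᵥ we) := by
    intro s
    simp only [dotProduct_add, add_dotProduct, dotProduct_smul, smul_dotProduct,
      smul_eq_mul]
    rw [hcross, dotProduct_comm we xt, hcross]
    ring
  have h1 := (hrip2 1).2
  have h2 := (hrip2 (-1)).1
  rw [hMv, hnum, hden] at h1 h2
  have hkey : p ⬝ᵥ p ≤ δ ^ 2 * (yt ⬝ᵥ yt) := by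
    nlinarith [mul_le_mul_of_nonneg_left h1 (by linarith : (0:ℝ) ≤ 1 - δ),
      mul_le_mul_of_nonneg_left h2 (by linarith : (0:ℝ) ≤ 1 + δ), hδ0, hδ1]
  refine ⟨hAunit, hkey, ?_⟩
  have hRes : residT M T *ᵥ yt = yt - p := by
    rw [residT, sub_mulVec, one_mulVec]
  rw [hRes]
  have hexp : (yt - p) ⬝ᵥ (yt - p) = yt ⬝ᵥ yt - p ⬝ᵥ p := by
    simp only [dotProduct_sub, sub_dotProduct]
    rw [hyp, dotProduct_comm p yt, hyp]
    ring
  rw [hexp]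
  nlinarith [hkey]


end
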